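/- (Asymptotic Tangent-Secant Rule.) In the ARW model with parameters 1/2 < β < 1 and ρ*(β) < r < 1, let T_p be any sequence such that T_p maximizes t ↦ Sep(t; ε_p, τ_p) over t ∈ [0,∞). Then Lfdr(T_p) / ((1 + FDR(T_p))/2) → 1 as p → ∞, where FDR and Lfdr are computed with ε = ε_p, τ = τ_p. -/

import Mathlib

open Filter Set MeasureTheory

noncomputable def gaussPDF (t : ℝ) : ℝ := (Real.sqrt (2 * Real.pi))⁻¹ * Real.exp (-(t ^ 2) / 2)

/-- standard normal CDF Φ -/
noncomputable def normCDF (t : ℝ) : ℝ := ∫ x in Set.Iic t, gaussPDF x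

/-- survival function of |N(τ,1)| -/
noncomputable def psiBar (τ t : ℝ) : ℝ := (1 - normCDF (t - τ)) + normCDF (-t - τ)

noncomputable def tprFn (ε τ t : ℝ) : ℝ := ε * psiBar τ t

noncomputable def fprFn (ε t : ℝ) : ℝ := (1 - ε) * psiBar 0 t

noncomputable def idrFn (ε τ t : ℝ) : ℝ := ε * normCDF (-t - τ)

/-- clipping proxy separation -/
noncomputable def sepFn (ε τ t : ℝ) : ℝ :=
  2 * τ * (tprFn ε τ t - 2 * idrFn ε τ t) / Real.sqrt (tprFn ε τ t + fprFn ε t)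

/-- proxy false discovery rate -/
noncomputable def fdrFn (ε τ t : ℝ) : ℝ := fprFn ε t / (tprFn ε τ t + fprFn ε t)

/-- magnitude of derivative of TPR -/
noncomputable def tprD (ε τ t : ℝ) : ℝ := ε * (gaussPDF (t - τ) + gaussPDF (t + τ))

/-- magnitude of derivative of FPR -/
noncomputable def fprD (ε t : ℝ) : ℝ := 2 * (1 - ε) * gaussPDF t

/-- proxy local false discovery rate -/
noncomputable def lfdrFn (ε τ t : ℝ) : ℝ := fprD ε t / (tprD ε τ t + fprD ε t)

noncomputable def rhoStar (β : ℝ) : ℝ :=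
  if β ≤ 1 / 2 then 0 else if β ≤ 3 / 4 then β - 1 / 2 else (1 - Real.sqrt (1 - β)) ^ 2

noncomputable def qStar (r β : ℝ) : ℝ := if r ≤ β / 3 then 4 * r else (β + r) ^ 2 / (4 * r)

/-- sparsity ε_p = p^{-β} in the ARW model -/
noncomputable def epsP (β : ℝ) (p : ℕ) : ℝ := (p : ℝ) ^ (-β)

/-- strength τ_p = √(2 r log p) in the ARW model -/
noncomputable def tauP (r : ℝ) (p : ℕ) : ℝ := Real.sqrt (2 * r * Real.log p)

/-- threshold t_p(q) = √(2 q log p) -/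
noncomputable def tP (q : ℝ) (p : ℕ) : ℝ := Real.sqrt (2 * q * Real.log p)

/-- folded two-point mixture G_{ε,τ} -/
noncomputable def gMix (ε τ t : ℝ) : ℝ :=
  (1 - ε) * (normCDF t - normCDF (-t)) + ε * (normCDF (t - τ) - normCDF (-t - τ))

/-- ideal HC objective -/
noncomputable def hcObj (ε τ t : ℝ) : ℝ :=
  ((1 - gMix ε τ t) - psiBar 0 t) / Real.sqrt (gMix ε τ t * (1 - gMix ε τ t))

/-- useful feature discovery exponent δ(q) -/
noncomputable def deltaExp (β r q : ℝ) : ℝ :=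
  if q ≤ r then 1 - β else 1 - β - (Real.sqrt q - Real.sqrt r) ^ 2

/-- separation growth exponent γ(q) -/
noncomputable def gammaExp (β r q : ℝ) : ℝ :=
  deltaExp β r q - max (1 - q) (deltaExp β r q) / 2

lemma gaussPDF_pos (t : ℝ) : 0 < gaussPDF t := by
  apply mul_pos (inv_pos.2 (Real.sqrt_pos.2 (by positivity))) (Real.exp_pos _)

lemma gaussPDF_eq (t : ℝ) : gaussPDF t = (Real.sqrt (2 * Real.pi))⁻¹ * Real.exp (-(1/2) * t ^ 2) := by
  unfold gaussPDF; ring_nf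

lemma continuous_gaussPDF : Continuous gaussPDF := by
  unfold gaussPDF; continuity

lemma integrable_gaussPDF : Integrable gaussPDF := by
  have h : Integrable (fun x : ℝ => Real.exp (-(1/2 : ℝ) * x ^ 2)) := integrable_exp_neg_mul_sq (by norm_num)
  have := h.const_mul ((Real.sqrt (2 * Real.pi))⁻¹)
  refine this.congr ?_
  filter_upwards with x
  rw [gaussPDF_eq]

lemma integral_gaussPDF : ∫ x, gaussPDF x = 1 := by
  have h : ∫ x : ℝ, Real.exp (-(1/2 : ℝ) * x ^ 2) = Real.sqrt (Real.pi / (1/2)) :=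
    integral_gaussian (1/2)
  have : ∫ x, gaussPDF x = (Real.sqrt (2 * Real.pi))⁻¹ * ∫ x : ℝ, Real.exp (-(1/2 : ℝ) * x ^ 2) := by
    rw [← integral_const_mul]
    congr 1; ext x; rw [gaussPDF_eq]
  rw [this, h]
  rw [show Real.pi / (1/2) = 2 * Real.pi by ring]
  rw [inv_mul_cancel₀ (by positivity)]

lemma gaussPDF_even (t : ℝ) : gaussPDF (-t) = gaussPDF t := by simp [gaussPDF]

lemma hasDerivAt_gaussPDF (t : ℝ) : HasDerivAt gaussPDF (-t * gaussPDF t) t := by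
  have h1 : HasDerivAt (fun x : ℝ => -(x ^ 2) / 2) (-t) t := by
    have := (hasDerivAt_pow 2 t).neg.div_const 2
    exact this.congr_deriv (by ring)
  have := (Real.hasDerivAt_exp (-(t^2)/2)).comp t h1
  have h2 := this.const_mul ((Real.sqrt (2 * Real.pi))⁻¹)
  exact h2.congr_deriv (by unfold gaussPDF; ring)

lemma normCDF_sub (a b : ℝ) : normCDF b - normCDF a = ∫ x in a..b, gaussPDF x := by
  rw [normCDF, normCDF, intervalIntegral.integral_Iic_sub_Iic integrable_gaussPDF.integrableOn integrable_gaussPDF.integrableOn]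

lemma hasDerivAt_normCDF (t : ℝ) : HasDerivAt normCDF (gaussPDF t) t := by
  have h : HasDerivAt (fun u => ∫ x in (0:ℝ)..u, gaussPDF x) (gaussPDF t) t :=
    intervalIntegral.integral_hasDerivAt_right
      (integrable_gaussPDF.intervalIntegrable)
      (continuous_gaussPDF.aestronglyMeasurable.stronglyMeasurableAtFilter)
      (continuous_gaussPDF.continuousAt)
  have : normCDF = fun u => normCDF 0 + ∫ x in (0:ℝ)..u, gaussPDF x := by
    ext u; rw [← normCDF_sub]; ring
  rw [this]
  exact h.const_add _

lemma normCDF_strictMono : StrictMono normCDF := by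
  intro a b hab
  have h : 0 < ∫ x in a..b, gaussPDF x :=
    intervalIntegral.intervalIntegral_pos_of_pos (integrable_gaussPDF.intervalIntegrable)
      (fun x => gaussPDF_pos x) hab
  have := normCDF_sub a b
  linarith

lemma normCDF_nonneg (t : ℝ) : 0 ≤ normCDF t :=
  setIntegral_nonneg measurableSet_Iic (fun x _ => (gaussPDF_pos x).le)

lemma normCDF_le_one (t : ℝ) : normCDF t ≤ 1 := by
  have h := intervalIntegral.integral_Iic_add_Ioi (μ := volume) (f := gaussPDF) (b := t)
    integrable_gaussPDF.integrableOn integrable_gaussPDF.integrableOn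
  have h2 : 0 ≤ ∫ x in Ioi t, gaussPDF x :=
    setIntegral_nonneg measurableSet_Ioi (fun x _ => (gaussPDF_pos x).le)
  rw [integral_gaussPDF] at h
  change normCDF t + _ = 1 at h
  linarith

lemma one_sub_normCDF (t : ℝ) : 1 - normCDF t = ∫ x in Ioi t, gaussPDF x := by
  have h := intervalIntegral.integral_Iic_add_Ioi (μ := volume) (f := gaussPDF) (b := t)
    integrable_gaussPDF.integrableOn integrable_gaussPDF.integrableOn
  rw [integral_gaussPDF] at h
  change normCDF t + _ = 1 at h
  linarith

lemma normCDF_neg (t : ℝ) : normCDF (-t) = 1 - normCDF t := by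
  rw [one_sub_normCDF, normCDF]
  rw [show (∫ x in Iic (-t), gaussPDF x) = ∫ x in Iic (-t), gaussPDF (-x) from by
    congr 1; ext x; rw [gaussPDF_even]]
  rw [integral_comp_neg_Iic]
  simp

lemma normCDF_zero : normCDF 0 = 1/2 := by
  have := normCDF_neg 0
  rw [neg_zero] at this
  linarith

lemma normCDF_pos (t : ℝ) : 0 < normCDF t := by
  have h : normCDF (t - 1) < normCDF t := normCDF_strictMono (by linarith)
  have := normCDF_nonneg (t - 1)
  linarith

lemma normCDF_lt_one (t : ℝ) : normCDF t < 1 := by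
  have h : normCDF t < normCDF (t + 1) := normCDF_strictMono (by linarith)
  have := normCDF_le_one (t + 1)
  linarith

lemma tendsto_gaussPDF_atTop : Tendsto gaussPDF atTop (nhds 0) := by
  have h : Tendsto (fun t : ℝ => -(t ^ 2) / 2) atTop atBot := by
    apply Tendsto.atBot_div_const (by norm_num)
    exact tendsto_neg_atTop_atBot.comp (tendsto_pow_atTop (by norm_num : (2:ℕ) ≠ 0))
  have := Real.tendsto_exp_atBot.comp h
  have h2 := this.const_mul ((Real.sqrt (2 * Real.pi))⁻¹)
  rw [mul_zero] at h2
  exact h2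

lemma integrable_mul_gaussPDF : Integrable (fun x => x * gaussPDF x) := by
  have h := (integrable_mul_exp_neg_mul_sq (b := 1/2) (by norm_num)).const_mul ((Real.sqrt (2 * Real.pi))⁻¹)
  refine h.congr ?_
  filter_upwards with x
  rw [gaussPDF_eq]; ring

lemma integral_Ioi_mul_gaussPDF (a : ℝ) : ∫ x in Ioi a, x * gaussPDF x = gaussPDF a := by
  have h := MeasureTheory.integral_Ioi_of_hasDerivAt_of_tendsto
    (f := fun x => -gaussPDF x) (f' := fun x => x * gaussPDF x) (a := a) (m := 0)
    ((continuous_gaussPDF.neg.continuousWithinAt))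
    (fun x _ => (hasDerivAt_gaussPDF x).neg.congr_deriv (by ring))
    integrable_mul_gaussPDF.integrableOn
    (by simpa using tendsto_gaussPDF_atTop.neg)
  rw [h]; ring

lemma mills_upper {x : ℝ} (hx : 0 < x) : 1 - normCDF x ≤ gaussPDF x / x := by
  rw [one_sub_normCDF]
  have h1 : ∫ u in Ioi x, gaussPDF u ≤ ∫ u in Ioi x, (u / x) * gaussPDF u := by
    apply setIntegral_mono_on
    · exact integrable_gaussPDF.integrableOn
    · exact ((integrable_mul_gaussPDF).div_const x).congr (by
        filter_upwards with u; ring) |>.integrableOn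
    · exact measurableSet_Ioi
    · intro u hu
      have hu' : x < u := hu
      have : (1:ℝ) ≤ u / x := (one_le_div hx).2 hu'.le
      nlinarith [gaussPDF_pos u]
  have h2 : ∫ u in Ioi x, (u / x) * gaussPDF u = gaussPDF x / x := by
    have : ∀ u : ℝ, (u / x) * gaussPDF u = (u * gaussPDF u) / x := fun u => by ring
    simp_rw [this]
    rw [integral_div, integral_Ioi_mul_gaussPDF]
  linarith

lemma mills_lower {x : ℝ} (hx : 0 ≤ x) : gaussPDF x / (x + 1) ≤ 1 - normCDF x := by
  rw [one_sub_normCDF]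
  set f' : ℝ → ℝ := fun u => gaussPDF u * ((u^2 + u + 1) / (u + 1)^2) with hf'
  have hcont : ContinuousOn f' (Ici x) := by
    apply continuous_gaussPDF.continuousOn.mul
    apply ContinuousOn.div
    · fun_prop
    · fun_prop
    · intro u hu
      have : (0:ℝ) ≤ u := le_trans hx hu
      positivity
  have hle : ∀ u ∈ Ioi x, f' u ≤ gaussPDF u := by
    intro u hu
    have hu0 : (0:ℝ) ≤ u := le_trans hx (le_of_lt hu)
    have h1 : u^2 + u + 1 ≤ (u + 1)^2 := by nlinarith
    have h2 : (u^2 + u + 1) / (u+1)^2 ≤ 1 := by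
      apply div_le_one_of_le₀ h1 (by positivity)
    have := gaussPDF_pos u
    calc f' u = gaussPDF u * ((u^2+u+1)/(u+1)^2) := rfl
    _ ≤ gaussPDF u * 1 := by
        apply mul_le_mul_of_nonneg_left h2 this.le
    _ = gaussPDF u := by ring
  have hnn : ∀ u ∈ Ioi x, 0 ≤ f' u := by
    intro u hu
    have hu0 : (0:ℝ) ≤ u := le_trans hx (le_of_lt hu)
    have := gaussPDF_pos u
    positivity
  have hint : IntegrableOn f' (Ioi x) := by
    apply Integrable.mono' (integrable_gaussPDF.integrableOn)
      (hcont.mono Ioi_subset_Ici_self |>.aestronglyMeasurable measurableSet_Ioi)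
    filter_upwards [ae_restrict_mem measurableSet_Ioi] with u hu
    rw [Real.norm_eq_abs, abs_of_nonneg (hnn u hu)]
    exact hle u hu
  have hderiv : ∀ u ∈ Ioi x, HasDerivAt (fun v => -(gaussPDF v / (v + 1))) (f' u) u := by
    intro u hu
    have hu0 : (0:ℝ) ≤ u := le_trans hx (le_of_lt hu)
    have hne : u + 1 ≠ 0 := by positivity
    have h := ((hasDerivAt_gaussPDF u).div ((hasDerivAt_id u).add_const 1) hne).neg
    exact h.congr_deriv (by rw [hf']; simp only [id]; field_simp; ring)
  have htend : Tendsto (fun v => -(gaussPDF v / (v + 1))) atTop (nhds 0) := by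
    have h1 : Tendsto (fun v : ℝ => gaussPDF v / (v + 1)) atTop (nhds 0) := by
      apply Tendsto.congr' (f₁ := fun v => gaussPDF v * (v+1)⁻¹)
      · filter_upwards with v; rw [div_eq_mul_inv]
      · have := tendsto_gaussPDF_atTop.mul (tendsto_inv_atTop_zero.comp (tendsto_atTop_add_const_right _ 1 tendsto_id))
        simpa using this
    simpa using h1.neg
  have heq := MeasureTheory.integral_Ioi_of_hasDerivAt_of_tendsto
    (f := fun v => -(gaussPDF v / (v + 1))) (f' := f') (a := x) (m := 0)
    (((continuous_gaussPDF.continuousOn.div (f := fun v : ℝ => gaussPDF v)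
        (g := fun v : ℝ => v + 1) (s := Ici x) (by fun_prop) (fun u hu => by
        have : (0:ℝ) ≤ u := le_trans hx hu; positivity)).neg).continuousWithinAt
        self_mem_Ici)
    hderiv hint htend
  have hmono : ∫ u in Ioi x, f' u ≤ ∫ u in Ioi x, gaussPDF u :=
    setIntegral_mono_on hint integrable_gaussPDF.integrableOn measurableSet_Ioi hle
  rw [heq] at hmono
  linarith [hmono]

section derivs

variable {ε τ t : ℝ}

lemma hasDerivAt_normCDF_sub (τ t : ℝ) :
    HasDerivAt (fun u => normCDF (u - τ)) (gaussPDF (t - τ)) t := by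
  have h := (hasDerivAt_normCDF (t - τ)).comp t ((hasDerivAt_id t).sub_const τ)
  exact h.congr_deriv (mul_one _)

lemma hasDerivAt_normCDF_negadd (τ t : ℝ) :
    HasDerivAt (fun u => normCDF (-u - τ)) (-(gaussPDF (t + τ))) t := by
  have hi : HasDerivAt (fun u : ℝ => -u - τ) (-1 : ℝ) t := by
    simpa using ((hasDerivAt_id t).neg.sub_const τ)
  have h := (hasDerivAt_normCDF (-t - τ)).comp t hi
  have : gaussPDF (-t - τ) = gaussPDF (t + τ) := by
    rw [show -t - τ = -(t + τ) by ring, gaussPDF_even]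
  rw [Function.comp_def] at h
  exact h.congr_deriv (by rw [this]; ring)

lemma hasDerivAt_tpr (ε τ t : ℝ) : HasDerivAt (tprFn ε τ) (-(tprD ε τ t)) t := by
  have h := (((hasDerivAt_normCDF_sub τ t).const_sub 1).add (hasDerivAt_normCDF_negadd τ t)).const_mul ε
  have h2 : ε * (-gaussPDF (t - τ) + -gaussPDF (t + τ)) = -(tprD ε τ t) := by unfold tprD; ring
  rw [h2] at h
  exact h

lemma hasDerivAt_fpr (ε t : ℝ) : HasDerivAt (fprFn ε) (-(fprD ε t)) t := by
  have h := (((hasDerivAt_normCDF_sub 0 t).const_sub 1).add (hasDerivAt_normCDF_negadd 0 t)).const_mul (1 - ε)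
  have h2 : (1 - ε) * (-gaussPDF (t - 0) + -gaussPDF (t + 0)) = -(fprD ε t) := by
    rw [show t - 0 = t by ring, show t + 0 = t by ring]; unfold fprD; ring
  rw [h2] at h
  exact h

lemma hasDerivAt_idr (ε τ t : ℝ) : HasDerivAt (idrFn ε τ) (-(ε * gaussPDF (t + τ))) t := by
  have h := (hasDerivAt_normCDF_negadd τ t).const_mul ε
  have h2 : ε * -gaussPDF (t + τ) = -(ε * gaussPDF (t + τ)) := by ring
  rw [h2] at h
  exact h

lemma tpr_pos (hε : 0 < ε) (τ t : ℝ) : 0 < tprFn ε τ t := by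
  have h1 := normCDF_lt_one (t - τ)
  have h2 := normCDF_pos (-t - τ)
  unfold tprFn psiBar
  nlinarith

lemma fpr_pos (hε : ε < 1) (t : ℝ) : 0 < fprFn ε t := by
  have h1 := normCDF_lt_one (t - 0)
  have h2 := normCDF_pos (-t - 0)
  unfold fprFn psiBar
  nlinarith

lemma tprD_pos (hε : 0 < ε) (τ t : ℝ) : 0 < tprD ε τ t := by
  have := gaussPDF_pos (t - τ); have := gaussPDF_pos (t + τ)
  unfold tprD; positivity

lemma fprD_pos (hε : ε < 1) (t : ℝ) : 0 < fprD ε t := by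
  have := gaussPDF_pos t
  unfold fprD; nlinarith

end derivs

lemma stationarity {ε τ t : ℝ} (hε0 : 0 < ε) (hε1 : ε < 1) (hτ : 0 < τ)
    (hmax : IsLocalMax (sepFn ε τ) t) :
    2 * (tprD ε τ t - 2 * ε * gaussPDF (t + τ)) * (tprFn ε τ t + fprFn ε t)
      = (tprFn ε τ t - 2 * idrFn ε τ t) * (tprD ε τ t + fprD ε t) := by
  have hD : 0 < tprFn ε τ t + fprFn ε t := add_pos (tpr_pos hε0 τ t) (fpr_pos hε1 t)
  set s := Real.sqrt (tprFn ε τ t + fprFn ε t) with hs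
  have hspos : 0 < s := Real.sqrt_pos.2 hD
  have hss : s * s = tprFn ε τ t + fprFn ε t := Real.mul_self_sqrt hD.le
  have hnum : HasDerivAt (fun u => 2 * τ * (tprFn ε τ u - 2 * idrFn ε τ u))
      (2 * τ * (-(tprD ε τ t) - 2 * -(ε * gaussPDF (t + τ)))) t :=
    ((hasDerivAt_tpr ε τ t).sub ((hasDerivAt_idr ε τ t).const_mul 2)).const_mul (2 * τ)
  have hden0 : HasDerivAt (fun u => tprFn ε τ u + fprFn ε u)
      (-(tprD ε τ t) + -(fprD ε t)) t := (hasDerivAt_tpr ε τ t).add (hasDerivAt_fpr ε t)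
  have hden : HasDerivAt (fun u => Real.sqrt (tprFn ε τ u + fprFn ε u))
      ((-(tprD ε τ t) + -(fprD ε t)) / (2 * s)) t := hden0.sqrt hD.ne'
  have hsep := hnum.div hden hspos.ne'
  have h0 : (2 * τ * (-(tprD ε τ t) - 2 * -(ε * gaussPDF (t + τ))) * s -
      2 * τ * (tprFn ε τ t - 2 * idrFn ε τ t) * ((-(tprD ε τ t) + -(fprD ε t)) / (2 * s))) / s ^ 2
      = 0 := hmax.hasDerivAt_eq_zero hsep
  rw [div_eq_zero_iff] at h0
  have h1 := h0.resolve_right (pow_ne_zero 2 hspos.ne')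
  field_simp at h1
  have h2 : (2*τ) * (2 * (tprD ε τ t - 2 * ε * gaussPDF (t + τ)) * (tprFn ε τ t + fprFn ε t))
      = (2*τ) * ((tprFn ε τ t - 2 * idrFn ε τ t) * (tprD ε τ t + fprD ε t)) := by
    linear_combination (-2) * h1 + (-4 * τ * (tprD ε τ t - 2 * ε * gaussPDF (t + τ))) * hss
  exact mul_left_cancel₀ (by positivity) h2

lemma exists_gt_of_hasDerivAt_pos {f : ℝ → ℝ} {x d : ℝ} (h : HasDerivAt f d x) (hd : 0 < d) :
    ∃ y, x < y ∧ f x < f y := by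
  have h1 := hasDerivAt_iff_tendsto_slope.mp h
  have h2 : ∀ᶠ y in nhdsWithin x {x}ᶜ, 0 < slope f x y := h1.eventually (eventually_gt_nhds hd)
  have hsub : Ioi x ⊆ ({x}ᶜ : Set ℝ) := fun y hy => ne_of_gt hy
  have h3 : ∀ᶠ y in nhdsWithin x (Ioi x), 0 < slope f x y := h2.filter_mono (nhdsWithin_mono x hsub)
  obtain ⟨y, hy1, hy2⟩ := (h3.and eventually_mem_nhdsWithin).exists
  refine ⟨y, hy2, ?_⟩
  have hxy : 0 < y - x := sub_pos.2 hy2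
  have := mul_pos hy1 hxy
  rw [slope_def_field] at this
  have : f y - f x > 0 := by
    have hne : y - x ≠ 0 := hxy.ne'
    calc f y - f x = (f y - f x) / (y - x) * (y - x) := by field_simp
    _ > 0 := this
  linarith

lemma argmax_ne_zero {ε τ : ℝ} (hε0 : 0 < ε) (hε1 : ε < 1) (hτ : 0 < τ)
    (hmax : ∀ t ∈ Ici (0:ℝ), sepFn ε τ t ≤ sepFn ε τ 0) : False := by
  have hD : 0 < tprFn ε τ 0 + fprFn ε 0 := add_pos (tpr_pos hε0 τ 0) (fpr_pos hε1 0)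
  set s := Real.sqrt (tprFn ε τ 0 + fprFn ε 0) with hs
  have hspos : 0 < s := Real.sqrt_pos.2 hD
  have hnum : HasDerivAt (fun u => 2 * τ * (tprFn ε τ u - 2 * idrFn ε τ u))
      (2 * τ * (-(tprD ε τ 0) - 2 * -(ε * gaussPDF (0 + τ)))) 0 :=
    ((hasDerivAt_tpr ε τ 0).sub ((hasDerivAt_idr ε τ 0).const_mul 2)).const_mul (2 * τ)
  have hden0 : HasDerivAt (fun u => tprFn ε τ u + fprFn ε u)
      (-(tprD ε τ 0) + -(fprD ε 0)) 0 := (hasDerivAt_tpr ε τ 0).add (hasDerivAt_fpr ε 0)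
  have hden : HasDerivAt (fun u => Real.sqrt (tprFn ε τ u + fprFn ε u))
      ((-(tprD ε τ 0) + -(fprD ε 0)) / (2 * s)) 0 := hden0.sqrt hD.ne'
  have hsep := hnum.div hden hspos.ne'
  have hA'0 : tprD ε τ 0 = 2 * ε * gaussPDF τ := by
    unfold tprD
    rw [show (0:ℝ) - τ = -τ by ring, show (0:ℝ) + τ = τ by ring, gaussPDF_even]
    ring
  have hT0 : tprFn ε τ 0 = ε := by
    unfold tprFn psiBar
    rw [show (0:ℝ) - τ = -τ by ring, show -(0:ℝ) - τ = -τ by ring]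
    ring
  have hI0 : idrFn ε τ 0 = ε * normCDF (-τ) := by
    unfold idrFn
    rw [show -(0:ℝ) - τ = -τ by ring]
  have hΦ : normCDF (-τ) < 1/2 := by
    have := normCDF_strictMono (show -τ < 0 by linarith)
    rwa [normCDF_zero] at this
  have hnum'0 : 2 * τ * (-(tprD ε τ 0) - 2 * -(ε * gaussPDF (0 + τ))) = 0 := by
    rw [hA'0, show (0:ℝ) + τ = τ by ring]; ring
  have hnumpos : 0 < 2 * τ * (tprFn ε τ 0 - 2 * idrFn ε τ 0) := by
    rw [hT0, hI0]
    have : 0 < ε * (1 - 2 * normCDF (-τ)) := by nlinarith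
    nlinarith
  have hdenneg : (-(tprD ε τ 0) + -(fprD ε 0)) / (2 * s) < 0 := by
    apply div_neg_of_neg_of_pos
    · have := tprD_pos hε0 τ 0; have := fprD_pos hε1 0; linarith
    · linarith
  have hdpos : 0 < (2 * τ * (-(tprD ε τ 0) - 2 * -(ε * gaussPDF (0 + τ))) * s -
      2 * τ * (tprFn ε τ 0 - 2 * idrFn ε τ 0) * ((-(tprD ε τ 0) + -(fprD ε 0)) / (2 * s))) / s ^ 2 := by
    rw [hnum'0]
    have h1 : 0 < -(2 * τ * (tprFn ε τ 0 - 2 * idrFn ε τ 0) * ((-(tprD ε τ 0) + -(fprD ε 0)) / (2 * s))) :=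
      by nlinarith
    have h2 : (0:ℝ) < s ^ 2 := by positivity
    apply div_pos (by linarith) h2
  obtain ⟨y, hy1, hy2⟩ := exists_gt_of_hasDerivAt_pos hsep hdpos
  have := hmax y (le_of_lt hy1)
  have heq : sepFn ε τ = fun y => 2 * τ * (tprFn ε τ y - 2 * idrFn ε τ y) / Real.sqrt (tprFn ε τ y + fprFn ε y) := rfl
  rw [heq] at this
  exact (lt_irrefl _ (lt_of_lt_of_le hy2 this)).elim

lemma sqrt_two_pi_ge_two : (2:ℝ) ≤ Real.sqrt (2 * Real.pi) := by
  have h1 : (4:ℝ) ≤ 2 * Real.pi := by nlinarith [Real.pi_gt_three]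
  nlinarith [Real.sq_sqrt (show (0:ℝ) ≤ 2*Real.pi by positivity),
    Real.sqrt_nonneg (2*Real.pi)]

lemma gaussPDF_le_half_exp (x : ℝ) : gaussPDF x ≤ 1/2 * Real.exp (-(x^2)/2) := by
  unfold gaussPDF
  have h1 : (Real.sqrt (2 * Real.pi))⁻¹ ≤ 1/2 := by
    rw [inv_le_comm₀ (by positivity) (by norm_num)]
    simpa using sqrt_two_pi_ge_two
  have := Real.exp_pos (-(x^2)/2)
  nlinarith

lemma gauss_shift {t τ : ℝ} (ht : 0 ≤ t) (hτ : 0 ≤ τ) :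
    gaussPDF (t + τ) ≤ Real.exp (-(τ^2)/2) * gaussPDF t := by
  unfold gaussPDF
  rw [show Real.exp (-(τ^2)/2) * ((Real.sqrt (2 * Real.pi))⁻¹ * Real.exp (-(t^2)/2))
      = (Real.sqrt (2 * Real.pi))⁻¹ * (Real.exp (-(τ^2)/2) * Real.exp (-(t^2)/2)) by ring,
    ← Real.exp_add]
  apply mul_le_mul_of_nonneg_left _ (by positivity)
  apply Real.exp_le_exp.2
  nlinarith

lemma normCDF_le_half {x : ℝ} (hx : x ≤ 0) : normCDF x ≤ 1/2 := by
  rw [← normCDF_zero]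
  exact normCDF_strictMono.monotone hx

lemma K_mul {t τ : ℝ} (ht : 0 ≤ t) (hτ : 1 ≤ τ) :
    1 - normCDF (t + τ) ≤ Real.exp (-(τ^2)/2) * (1 - normCDF (t - τ)) := by
  have hE : (0:ℝ) < Real.exp (-(τ^2)/2) := Real.exp_pos _
  rcases le_or_gt t τ with hcase | hcase
  · -- t ≤ τ : 1 - Φ(t-τ) ≥ 1/2
    have hG : 1/2 ≤ 1 - normCDF (t - τ) := by
      have := normCDF_le_half (show t - τ ≤ 0 by linarith)
      linarith
    have h1 : 1 - normCDF (t + τ) ≤ gaussPDF (t + τ) := by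
      have h := mills_upper (show (0:ℝ) < t + τ by linarith)
      have h2 : gaussPDF (t + τ) / (t + τ) ≤ gaussPDF (t + τ) :=
        div_le_self (gaussPDF_pos _).le (by linarith)
      linarith
    have h2 : gaussPDF (t + τ) ≤ 1/2 * Real.exp (-(τ^2)/2) := by
      have := gaussPDF_le_half_exp (t + τ)
      have hexp : Real.exp (-((t+τ)^2)/2) ≤ Real.exp (-(τ^2)/2) :=
        Real.exp_le_exp.2 (by nlinarith)
      linarith
    nlinarith
  · -- τ < t
    have hmu := mills_upper (show (0:ℝ) < t + τ by linarith)
    have hml := mills_lower (show (0:ℝ) ≤ t - τ by linarith)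
    have key : gaussPDF (t + τ) / (t + τ) ≤
        Real.exp (-(τ^2)/2) * (gaussPDF (t - τ) / (t - τ + 1)) := by
      rw [div_le_iff₀ (show (0:ℝ) < t + τ by linarith)]
      rw [show Real.exp (-(τ^2)/2) * (gaussPDF (t - τ) / (t - τ + 1)) * (t + τ)
        = (Real.exp (-(τ^2)/2) * gaussPDF (t - τ) * (t + τ)) / (t - τ + 1) by ring]
      rw [le_div_iff₀ (show (0:ℝ) < t - τ + 1 by linarith)]
      -- gaussPDF (t+τ) * (t-τ+1) ≤ exp(-τ²/2) * gaussPDF (t-τ) * (t+τ)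
      have hpt : gaussPDF (t + τ) * Real.exp (2*t*τ - τ^2/2) = gaussPDF (t - τ) * Real.exp (-(τ^2)/2) := by
        unfold gaussPDF
        have harg : -(t + τ) ^ 2 / 2 + (2 * t * τ - τ ^ 2 / 2) = -(t - τ)^2/2 + (-(τ^2)/2) := by ring
        rw [mul_assoc, ← Real.exp_add, harg, Real.exp_add, ← mul_assoc]
      have hpoly : t - τ + 1 ≤ Real.exp (2*t*τ - τ^2/2) := by
        have h1 : t + 1 ≤ Real.exp t := by linarith [Real.add_one_le_exp t]
        have h2 : Real.exp t ≤ Real.exp (2*t*τ - τ^2/2) := Real.exp_le_exp.2 (by nlinarith)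
        linarith
      calc gaussPDF (t + τ) * (t - τ + 1)
          ≤ gaussPDF (t + τ) * Real.exp (2*t*τ - τ^2/2) :=
            mul_le_mul_of_nonneg_left hpoly (gaussPDF_pos _).le
        _ = gaussPDF (t - τ) * Real.exp (-(τ^2)/2) := hpt
        _ ≤ Real.exp (-(τ^2)/2) * gaussPDF (t - τ) * (t + τ) := by
            have := gaussPDF_pos (t - τ)
            have h3 : (1:ℝ) ≤ t + τ := by linarith
            nlinarith [mul_pos this hE]
    calc 1 - normCDF (t + τ) ≤ gaussPDF (t + τ) / (t + τ) := hmu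
      _ ≤ Real.exp (-(τ^2)/2) * (gaussPDF (t - τ) / (t - τ + 1)) := key
      _ ≤ Real.exp (-(τ^2)/2) * (1 - normCDF (t - τ)) :=
          mul_le_mul_of_nonneg_left hml hE.le

lemma surv_le_gauss {x : ℝ} (hx : 1 ≤ x) : 1 - normCDF x ≤ gaussPDF x := by
  have h := mills_upper (show (0:ℝ) < x by linarith)
  have h2 : gaussPDF x / x ≤ gaussPDF x := div_le_self (gaussPDF_pos _).le hx
  linarith

lemma exp_mul_gauss (x y : ℝ) :
    Real.exp x * gaussPDF y = (Real.sqrt (2*Real.pi))⁻¹ * Real.exp (x + -(y^2)/2) := by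
  unfold gaussPDF; rw [Real.exp_add]; ring

lemma KM_mul {t τ : ℝ} (ht : 0 ≤ t) (hτ : 1 ≤ τ) :
    (1 - normCDF (t + τ)) * gaussPDF (t - τ)
      ≤ Real.exp (-(τ^2)/2) * ((1 - normCDF (t - τ)) * gaussPDF t) := by
  have hE : (0:ℝ) < Real.exp (-(τ^2)/2) := Real.exp_pos _
  have hφp := gaussPDF_pos (t + τ)
  have hφm := gaussPDF_pos (t - τ)
  have hφ0 := gaussPDF_pos t
  have h1 : 1 - normCDF (t + τ) ≤ gaussPDF (t + τ) := surv_le_gauss (by linarith)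
  have hstep : (1 - normCDF (t+τ)) * gaussPDF (t-τ) ≤ gaussPDF (t+τ) * gaussPDF (t-τ) :=
    mul_le_mul_of_nonneg_right h1 hφm.le
  rcases le_or_gt t τ with hcase | hcase
  · have hG : 1/2 ≤ 1 - normCDF (t - τ) := by
      have := normCDF_le_half (show t - τ ≤ 0 by linarith); linarith
    have h2 : gaussPDF (t+τ) ≤ 1/2 * Real.exp (-((t+τ)^2)/2) := gaussPDF_le_half_exp _
    have h3 : Real.exp (-((t+τ)^2)/2) * gaussPDF (t - τ) ≤ Real.exp (-(τ^2)/2) * gaussPDF t := by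
      rw [exp_mul_gauss, exp_mul_gauss]
      exact mul_le_mul_of_nonneg_left (Real.exp_le_exp.2 (by nlinarith)) (by positivity)
    calc (1 - normCDF (t+τ)) * gaussPDF (t-τ) ≤ gaussPDF (t+τ) * gaussPDF (t-τ) := hstep
      _ ≤ (1/2 * Real.exp (-((t+τ)^2)/2)) * gaussPDF (t-τ) := mul_le_mul_of_nonneg_right h2 hφm.le
      _ = 1/2 * (Real.exp (-((t+τ)^2)/2) * gaussPDF (t-τ)) := by ring
      _ ≤ 1/2 * (Real.exp (-(τ^2)/2) * gaussPDF t) := by linarith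
      _ ≤ Real.exp (-(τ^2)/2) * ((1 - normCDF (t-τ)) * gaussPDF t) := by
          nlinarith [mul_pos hE hφ0]
  · have hml := mills_lower (show (0:ℝ) ≤ t - τ by linarith)
    have hc : (0:ℝ) < t - τ + 1 := by linarith
    have key : gaussPDF (t+τ) * (t - τ + 1) ≤ Real.exp (-(τ^2)/2) * gaussPDF t := by
      have hpoly : t - τ + 1 ≤ Real.exp (t * τ) := by
        have h0 := Real.add_one_le_exp t
        have h2 : Real.exp t ≤ Real.exp (t * τ) := Real.exp_le_exp.2 (by nlinarith)
        linarith
      have heq : gaussPDF (t+τ) * Real.exp (t*τ) = Real.exp (-(τ^2)/2) * gaussPDF t := by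
        rw [mul_comm (gaussPDF (t+τ)), exp_mul_gauss, exp_mul_gauss]
        congr 1
        ring
      calc gaussPDF (t+τ) * (t - τ + 1) ≤ gaussPDF (t+τ) * Real.exp (t*τ) :=
            mul_le_mul_of_nonneg_left hpoly hφp.le
        _ = Real.exp (-(τ^2)/2) * gaussPDF t := heq
    have h5 : gaussPDF (t+τ) * gaussPDF (t-τ)
        ≤ (Real.exp (-(τ^2)/2) * gaussPDF t) * (gaussPDF (t-τ) / (t-τ+1)) := by
      rw [show (Real.exp (-(τ^2)/2) * gaussPDF t) * (gaussPDF (t-τ)/(t-τ+1))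
          = (Real.exp (-(τ^2)/2) * gaussPDF t) * gaussPDF (t-τ) / (t-τ+1) by ring,
        le_div_iff₀ hc]
      nlinarith [key]
    have h6 : (Real.exp (-(τ^2)/2) * gaussPDF t) * (gaussPDF (t-τ)/(t-τ+1))
        ≤ (Real.exp (-(τ^2)/2) * gaussPDF t) * (1 - normCDF (t-τ)) :=
      mul_le_mul_of_nonneg_left hml (by positivity)
    calc (1 - normCDF (t+τ)) * gaussPDF (t-τ) ≤ gaussPDF (t+τ) * gaussPDF (t-τ) := hstep
      _ ≤ (Real.exp (-(τ^2)/2) * gaussPDF t) * (gaussPDF (t-τ)/(t-τ+1)) := h5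
      _ ≤ (Real.exp (-(τ^2)/2) * gaussPDF t) * (1 - normCDF (t-τ)) := h6
      _ = Real.exp (-(τ^2)/2) * ((1 - normCDF (t-τ)) * gaussPDF t) := by ring

lemma gauss_anti {t τ : ℝ} (ht : 0 ≤ t) (hτ : 0 ≤ τ) : gaussPDF (t + τ) ≤ gaussPDF (t - τ) := by
  unfold gaussPDF
  apply mul_le_mul_of_nonneg_left (Real.exp_le_exp.2 (by nlinarith)) (by positivity)

set_option maxHeartbeats 2000000 in
lemma key_bound {ε τ t : ℝ} (hε0 : 0 < ε) (hε : ε ≤ 1/2) (hτ : 1 ≤ τ) (ht : 0 ≤ t)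
    (hE6 : Real.exp (-(τ^2)/2) ≤ 1/6)
    (hstat : 2 * (tprD ε τ t - 2 * ε * gaussPDF (t + τ)) * (tprFn ε τ t + fprFn ε t)
      = (tprFn ε τ t - 2 * idrFn ε τ t) * (tprD ε τ t + fprD ε t)) :
    |lfdrFn ε τ t / ((1 + fdrFn ε τ t) / 2) - 1| ≤ 6 * Real.exp (-(τ^2)/2) := by
  have hε1 : ε < 1 := by linarith
  set E := Real.exp (-(τ^2)/2) with hEdef
  have hE : 0 < E := Real.exp_pos _
  have hφp := gaussPDF_pos (t + τ)
  have hφm := gaussPDF_pos (t - τ)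
  have hφ0 := gaussPDF_pos t
  have hA := tpr_pos hε0 τ t
  have hF := fpr_pos hε1 t
  have hA' := tprD_pos hε0 τ t
  have hF' := fprD_pos hε1 t
  have hAF : 0 < tprFn ε τ t + fprFn ε t := by linarith
  have hS1 : 0 < tprD ε τ t + fprD ε t := by linarith
  have hS3 : 0 < tprFn ε τ t + 2 * fprFn ε t := by linarith
  have hI : idrFn ε τ t = ε * (1 - normCDF (t + τ)) := by
    unfold idrFn
    rw [show -t - τ = -(t + τ) by ring, normCDF_neg]
  have hGp : 0 ≤ 1 - normCDF (t + τ) := by linarith [normCDF_le_one (t + τ)]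
  have hGm : 0 < 1 - normCDF (t - τ) := by linarith [normCDF_lt_one (t - τ)]
  have hAge : ε * (1 - normCDF (t - τ)) ≤ tprFn ε τ t := by
    unfold tprFn psiBar
    have := normCDF_nonneg (-t - τ)
    nlinarith
  -- u-bound : J ≤ E * F'
  have hu : 2 * ε * gaussPDF (t + τ) ≤ E * fprD ε t := by
    have h1 := gauss_shift ht (by linarith : (0:ℝ) ≤ τ)
    unfold fprD
    nlinarith [mul_pos hE hφ0]
  -- v-bound : I * S1 ≤ 2 E (A+F) F'
  have hv : idrFn ε τ t * (tprD ε τ t + fprD ε t)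
      ≤ 2 * E * ((tprFn ε τ t + fprFn ε t) * fprD ε t) := by
    have hS1le : tprD ε τ t + fprD ε t ≤ 2 * ε * gaussPDF (t - τ) + 2 * (1 - ε) * gaussPDF t := by
      unfold tprD fprD
      nlinarith [gauss_anti ht (by linarith : (0:ℝ) ≤ τ)]
    have step1 : idrFn ε τ t * (tprD ε τ t + fprD ε t)
        ≤ (ε * (1 - normCDF (t + τ))) * (2 * ε * gaussPDF (t - τ) + 2 * (1 - ε) * gaussPDF t) := by
      rw [hI]
      exact mul_le_mul_of_nonneg_left hS1le (mul_nonneg hε0.le hGp)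
    have hKM := KM_mul ht hτ
    have hK := K_mul ht hτ
    have step3 : 2 * ε^2 * ((1 - normCDF (t + τ)) * gaussPDF (t - τ))
        ≤ 2 * ε * (1 - ε) * (E * ((1 - normCDF (t - τ)) * gaussPDF t)) := by
      have h1 : 2 * ε^2 * ((1 - normCDF (t + τ)) * gaussPDF (t - τ))
          ≤ 2 * ε^2 * (E * ((1 - normCDF (t - τ)) * gaussPDF t)) := by
        apply mul_le_mul_of_nonneg_left hKM (by positivity)
      have h2 : 2 * ε^2 * (E * ((1 - normCDF (t - τ)) * gaussPDF t))
          ≤ 2 * ε * (1 - ε) * (E * ((1 - normCDF (t - τ)) * gaussPDF t)) := by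
        apply mul_le_mul_of_nonneg_right _ (mul_nonneg hE.le (mul_nonneg hGm.le hφ0.le))
        nlinarith
      linarith
    have step4 : 2 * ε * (1 - ε) * ((1 - normCDF (t + τ)) * gaussPDF t)
        ≤ 2 * ε * (1 - ε) * (E * ((1 - normCDF (t - τ)) * gaussPDF t)) := by
      apply mul_le_mul_of_nonneg_left _
        (mul_nonneg (by linarith : (0:ℝ) ≤ 2 * ε) (by linarith : (0:ℝ) ≤ 1 - ε))
      have := mul_le_mul_of_nonneg_right hK hφ0.le
      linarith
    have step5 : (ε * (1 - normCDF (t + τ))) * (2 * ε * gaussPDF (t - τ) + 2 * (1 - ε) * gaussPDF t)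
        = 2 * ε^2 * ((1 - normCDF (t + τ)) * gaussPDF (t - τ))
          + 2 * ε * (1 - ε) * ((1 - normCDF (t + τ)) * gaussPDF t) := by ring
    have step6 : 4 * ε * (1 - ε) * (E * ((1 - normCDF (t - τ)) * gaussPDF t))
        ≤ 2 * E * ((tprFn ε τ t + fprFn ε t) * fprD ε t) := by
      have h1 : ε * (1 - normCDF (t - τ)) ≤ tprFn ε τ t + fprFn ε t := by linarith
      have h2 : fprD ε t = 2 * (1 - ε) * gaussPDF t := rfl
      rw [h2]
      have h3 : 0 ≤ 2 * (1 - ε) * gaussPDF t :=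
        mul_nonneg (by linarith : (0:ℝ) ≤ 2 * (1 - ε)) hφ0.le
      have h4 := mul_le_mul_of_nonneg_right h1 h3
      calc 4 * ε * (1 - ε) * (E * ((1 - normCDF (t - τ)) * gaussPDF t))
          = 2 * E * (ε * (1 - normCDF (t - τ)) * (2 * (1 - ε) * gaussPDF t)) := by ring
        _ ≤ 2 * E * ((tprFn ε τ t + fprFn ε t) * (2 * (1 - ε) * gaussPDF t)) := by
            apply mul_le_mul_of_nonneg_left h4 (by positivity)
    linarith
  -- identity
  obtain ⟨P, hPdef⟩ : ∃ x : ℝ, x = 2 * ((tprFn ε τ t + fprFn ε t) * fprD ε t) := ⟨_, rfl⟩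
  have hP : 0 < P := by rw [hPdef]; positivity
  obtain ⟨Err, hErrdef⟩ : ∃ x : ℝ, x = 2 * (2 * ε * gaussPDF (t + τ)) * (tprFn ε τ t + fprFn ε t)
           - 2 * (idrFn ε τ t * (tprD ε τ t + fprD ε t)) := ⟨_, rfl⟩
  have hid : (tprD ε τ t + fprD ε t) * (tprFn ε τ t + 2 * fprFn ε t) = P + Err := by
    rw [hPdef, hErrdef]
    linear_combination hstat
  have hErrub : Err ≤ E * P := by
    have h1 : 2 * (2 * ε * gaussPDF (t + τ)) * (tprFn ε τ t + fprFn ε t)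
        ≤ 2 * (E * fprD ε t) * (tprFn ε τ t + fprFn ε t) := by
      apply mul_le_mul_of_nonneg_right _ hAF.le
      linarith
    have h2 : 0 ≤ idrFn ε τ t * (tprD ε τ t + fprD ε t) := by
      rw [hI]; exact mul_nonneg (mul_nonneg hε0.le hGp) hS1.le
    have h3 : 2 * (E * fprD ε t) * (tprFn ε τ t + fprFn ε t) = E * P := by rw [hPdef]; ring
    rw [hErrdef]
    linarith
  have hErrlb : -(2 * E * P) ≤ Err := by
    have h1 : 0 ≤ 2 * (2 * ε * gaussPDF (t + τ)) * (tprFn ε τ t + fprFn ε t) := by positivity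
    have h5 : 2 * (2 * E * ((tprFn ε τ t + fprFn ε t) * fprD ε t)) = 2 * E * P := by
      rw [hPdef]; ring
    rw [hErrdef]
    linarith [hv]
  have hprod : 0 < (tprD ε τ t + fprD ε t) * (tprFn ε τ t + 2 * fprFn ε t) :=
    mul_pos hS1 hS3
  -- ratio equality
  have hρ : lfdrFn ε τ t / ((1 + fdrFn ε τ t) / 2)
      = P / ((tprD ε τ t + fprD ε t) * (tprFn ε τ t + 2 * fprFn ε t)) := by
    unfold lfdrFn fdrFn
    rw [hPdef]
    field_simp
    ring
  rw [hρ]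
  have hrw : P / ((tprD ε τ t + fprD ε t) * (tprFn ε τ t + 2 * fprFn ε t)) - 1
      = -Err / ((tprD ε τ t + fprD ε t) * (tprFn ε τ t + 2 * fprFn ε t)) := by
    rw [div_sub_one hprod.ne', hid]
    ring_nf
  rw [hrw, abs_div, abs_of_pos hprod]
  rw [div_le_iff₀ hprod]
  have hEP : 0 ≤ E * P := (mul_pos hE hP).le
  have habs : |(-Err)| ≤ 2 * E * P := by
    rw [abs_le]
    constructor
    · linarith
    · linarith
  have hlow : P * (1 - 2 * E) ≤ (tprD ε τ t + fprD ε t) * (tprFn ε τ t + 2 * fprFn ε t) := by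
    rw [hid]
    linarith
  have h6 := mul_le_mul_of_nonneg_left hlow (by positivity : (0:ℝ) ≤ 6 * E)
  have h7 : E * (E * P) ≤ 1/6 * (E * P) := mul_le_mul_of_nonneg_right hE6 hEP
  linarith [habs, h6, h7, hEP]

/-- Asymptotic Tangent–Secant rule: Lfdr(T_ideal) / ((1 + FDR(T_ideal))/2) → 1. -/
theorem stmt5 (β r : ℝ) (hβ1 : 1 / 2 < β) (hβ2 : β < 1)
    (hr1 : rhoStar β < r) (hr2 : r < 1)
    (T : ℕ → ℝ)
    (hT : ∀ p : ℕ, T p ∈ Set.Ici (0 : ℝ) ∧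
      ∀ t ∈ Set.Ici (0 : ℝ), sepFn (epsP β p) (tauP r p) t ≤ sepFn (epsP β p) (tauP r p) (T p)) :
    Filter.Tendsto
      (fun p : ℕ =>
        lfdrFn (epsP β p) (tauP r p) (T p) / ((1 + fdrFn (epsP β p) (tauP r p) (T p)) / 2))
      Filter.atTop (nhds 1) := by
  have hβ0 : 0 < β := by linarith
  have hr0 : 0 < r := by
    have h : 0 ≤ rhoStar β := by
      unfold rhoStar
      split_ifs with h1 h2
      · norm_num
      · linarith [not_le.1 h1]
      · positivity
    linarith
  set c : ℕ → ℝ := fun p => Real.exp (-(tauP r p)^2/2) with hc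
  have hlog : Tendsto (fun p : ℕ => Real.log p) atTop atTop :=
    Real.tendsto_log_atTop.comp tendsto_natCast_atTop_atTop
  have hctend : Tendsto c atTop (nhds 0) := by
    have h1 : Tendsto (fun p : ℕ => Real.exp (-(r * Real.log p))) atTop (nhds 0) := by
      apply Real.tendsto_exp_atBot.comp
      exact tendsto_neg_atTop_atBot.comp (hlog.const_mul_atTop hr0)
    apply Tendsto.congr' _ h1
    filter_upwards [hlog.eventually_ge_atTop 0] with p hp
    have hnn : 0 ≤ 2 * r * Real.log p := by positivity
    rw [hc]
    simp only
    unfold tauP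
    rw [Real.sq_sqrt hnn]
    congr 1
    ring
  have hεtend : Tendsto (fun p : ℕ => epsP β p) atTop (nhds 0) := by
    have := (tendsto_rpow_neg_atTop hβ0).comp (tendsto_natCast_atTop_atTop (R := ℝ))
    exact this
  have hev : ∀ᶠ p : ℕ in atTop,
      |lfdrFn (epsP β p) (tauP r p) (T p) /
        ((1 + fdrFn (epsP β p) (tauP r p) (T p)) / 2) - 1| ≤ 6 * c p := by
    have hε0 : ∀ᶠ p : ℕ in atTop, 0 < epsP β p := by
      filter_upwards [eventually_ge_atTop 1] with p hp
      have : (0:ℝ) < p := by exact_mod_cast hp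
      exact Real.rpow_pos_of_pos this _
    have hεhalf : ∀ᶠ p : ℕ in atTop, epsP β p ≤ 1/2 :=
      hεtend.eventually (eventually_le_nhds (by norm_num))
    have hτ1 : ∀ᶠ p : ℕ in atTop, 1 ≤ tauP r p := by
      filter_upwards [hlog.eventually_ge_atTop (1/(2*r))] with p hp
      unfold tauP
      rw [show (1:ℝ) = Real.sqrt 1 from (Real.sqrt_one).symm]
      apply Real.sqrt_le_sqrt
      rw [div_le_iff₀ (by positivity)] at hp
      linarith
    have hc6 : ∀ᶠ p : ℕ in atTop, c p ≤ 1/6 :=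
      hctend.eventually (eventually_le_nhds (by norm_num))
    filter_upwards [hε0, hεhalf, hτ1, hc6] with p h1 h2 h3 h4
    have hε1 : epsP β p < 1 := by linarith
    have hτ0 : 0 < tauP r p := by linarith
    obtain ⟨hT0, hTmax⟩ := hT p
    have hT0' : (0:ℝ) ≤ T p := hT0
    have hTpos : 0 < T p := by
      rcases eq_or_lt_of_le hT0' with heq | hlt
      · exfalso
        apply argmax_ne_zero h1 hε1 hτ0
        intro t htmem
        have := hTmax t htmem
        rwa [← heq] at this
      · exact hlt
    have hlocmax : IsLocalMax (sepFn (epsP β p) (tauP r p)) (T p) := by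
      have hmem : ∀ᶠ t in nhds (T p), t ∈ Ioi (0:ℝ) := isOpen_Ioi.eventually_mem hTpos
      filter_upwards [hmem] with t ht
      exact hTmax t (le_of_lt (show (0:ℝ) < t from ht))
    have hstat := stationarity h1 hε1 hτ0 hlocmax
    exact key_bound h1 h2 h3 hT0' h4 hstat
  have hup : Tendsto (fun p : ℕ => 1 + 6 * c p) atTop (nhds 1) := by
    have h0 : Tendsto (fun _ : ℕ => (1:ℝ)) atTop (nhds 1) := tendsto_const_nhds
    have := h0.add (hctend.const_mul 6)
    simpa using this
  have hdown : Tendsto (fun p : ℕ => 1 - 6 * c p) atTop (nhds 1) := by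
    have h0 : Tendsto (fun _ : ℕ => (1:ℝ)) atTop (nhds 1) := tendsto_const_nhds
    have := h0.sub (hctend.const_mul 6)
    simpa using this
  apply tendsto_of_tendsto_of_tendsto_of_le_of_le' hdown hup
  · filter_upwards [hev] with p hp
    have := abs_le.1 hp
    linarith [this.1]
  · filter_upwards [hev] with p hp
    have := abs_le.1 hp
    linarith [this.2]
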